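/- Let S ⊆ ℝ^n be compact, P : S → S continuous, and x* ∈ S a fixed point of P that is stable and globally attractive on S. Then there exists a class-KL function β with β(s,0) ≥ s for all s ≥ 0 such that: (a) |P^k(x) − x*| ≤ β(|x − x*|, k) for every x ∈ S and k ∈ ℕ; and (b) for every ε > 0, every compact set K ⊆ ℝ^n, and every J ∈ ℕ there exists δ* > 0 such that for every δ ∈ (0, δ*], every δ-perturbed sequence (y_j) of P with y₀ ∈ K satisfies |y_j − x*| ≤ β(|y₀ − x*|, j) + ε for every index j with j ≤ J. -/

import Mathlib

open Set Metric Filter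


/-- Auxiliary: continuous class-K envelope of a monotone modulus. -/
private 
lemma envelopeK (ν : ℝ → ℝ) (hmono : Monotone ν) (hnn : ∀ s, 0 ≤ ν s)
    (hsmall : ∀ ε > (0:ℝ), ∃ δ > (0:ℝ), ∀ s, 0 ≤ s → s ≤ δ → ν s ≤ ε) :
    ∃ α : ℝ → ℝ, ContinuousOn α (Set.Ici 0) ∧ MonotoneOn α (Set.Ici 0) ∧ α 0 = 0 ∧
      (∀ s, 0 ≤ s → s ≤ α s) ∧ (∀ s, 0 ≤ s → ν s ≤ α s) ∧ (∀ s, 0 ≤ s → 0 ≤ α s) := by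
  have hint : ∀ a b : ℝ, IntervalIntegrable ν MeasureTheory.volume a b :=
    fun a b => (hmono.monotoneOn _).intervalIntegrable
  set F : ℝ → ℝ := fun x => ∫ u in (0:ℝ)..x, ν u with hF
  have hFc : Continuous F := intervalIntegral.continuous_primitive hint 0
  set α : ℝ → ℝ := fun s => s + (if s = 0 then 0 else s⁻¹ * (∫ u in s..2*s, ν u)) with hα
  have hν0 : ν 0 = 0 := by
    refine le_antisymm ?_ (hnn 0)
    by_contra h
    push_neg at h
    obtain ⟨δ, hδ, hδp⟩ := hsmall (ν 0 / 2) (by linarith)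
    have := hδp 0 le_rfl hδ.le
    linarith
  have hsub : ∀ s : ℝ, 0 < s → s⁻¹ * (∫ u in s..2*s, ν u) = ∫ u in (0:ℝ)..1, ν (s*u + s) := by
    intro s hs
    rw [intervalIntegral.integral_comp_mul_add ν hs.ne' s]
    norm_num [smul_eq_mul, two_mul]
  have hintc : ∀ s : ℝ, 0 ≤ s → IntervalIntegrable (fun u => ν (s*u + s)) MeasureTheory.volume 0 1 := by
    intro s hs
    apply MonotoneOn.intervalIntegrable
    intro u _ v _ huv
    exact hmono (by nlinarith)
  have hlow : ∀ s : ℝ, 0 < s → ν s ≤ s⁻¹ * (∫ u in s..2*s, ν u) := by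
    intro s hs
    have h2 := intervalIntegral.integral_mono_on (by linarith : s ≤ 2*s)
      (_root_.intervalIntegrable_const) (hint s (2*s)) (fun u hu => hmono hu.1)
    rw [intervalIntegral.integral_const, smul_eq_mul] at h2
    have h1 : s * ν s ≤ ∫ u in s..2*s, ν u := by
      calc s * ν s = (2*s - s) * ν s := by ring
      _ ≤ _ := h2
    calc ν s = s⁻¹ * (s * ν s) := by field_simp
    _ ≤ _ := mul_le_mul_of_nonneg_left h1 (by positivity)
  have hhigh : ∀ s : ℝ, 0 < s → s⁻¹ * (∫ u in s..2*s, ν u) ≤ ν (2*s) := by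
    intro s hs
    have h2 := intervalIntegral.integral_mono_on (by linarith : s ≤ 2*s)
      (hint s (2*s)) (_root_.intervalIntegrable_const) (fun u hu => hmono hu.2)
    rw [intervalIntegral.integral_const, smul_eq_mul] at h2
    have h1 : (∫ u in s..2*s, ν u) ≤ s * ν (2*s) := by
      calc (∫ u in s..2*s, ν u) ≤ (2*s - s) * ν (2*s) := h2
      _ = s * ν (2*s) := by ring
    calc s⁻¹ * (∫ u in s..2*s, ν u) ≤ s⁻¹ * (s * ν (2*s)) :=
      mul_le_mul_of_nonneg_left h1 (by positivity)
    _ = ν (2*s) := by field_simp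
  have hα0 : α 0 = 0 := by simp [hα]
  have hαnn : ∀ s, 0 ≤ s → 0 ≤ α s := by
    intro s hs
    rcases eq_or_lt_of_le hs with h | h
    · rw [← h, hα0]
    · simp only [hα, if_neg h.ne']
      have := (hnn s).trans (hlow s h); linarith
  have hmonoα : MonotoneOn α (Set.Ici 0) := by
    intro x hx y hy hxy
    rcases eq_or_lt_of_le (mem_Ici.mp hx) with h0 | h0
    · rw [← h0, hα0]; exact hαnn y hy
    · have h0' : 0 < y := lt_of_lt_of_le h0 hxy
      simp only [hα, if_neg h0.ne', if_neg h0'.ne']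
      have key : (∫ u in (0:ℝ)..1, ν (x*u + x)) ≤ ∫ u in (0:ℝ)..1, ν (y*u + y) := by
        apply intervalIntegral.integral_mono_on zero_le_one (hintc x hx) (hintc y (le_trans hx hxy))
        intro u hu
        exact hmono (by nlinarith [hu.1])
      rw [hsub x h0, hsub y h0']
      linarith
  have hcont : ContinuousOn α (Set.Ici 0) := by
    intro s hs
    rcases eq_or_lt_of_le (mem_Ici.mp hs) with h0 | h0
    · rw [Metric.continuousWithinAt_iff]
      intro ε hε
      obtain ⟨δ, hδ, hδp⟩ := hsmall (ε/3) (by linarith)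
      refine ⟨min (δ/2) (ε/3), by positivity, fun x hx hxd => ?_⟩
      have hx0 : (0:ℝ) ≤ x := hx
      have hxlt : x < min (δ/2) (ε/3) := by
        have hd : dist x s = x := by rw [← h0, Real.dist_eq, sub_zero, abs_of_nonneg hx0]
        rwa [hd] at hxd
      have hb : α x ≤ x + ε/3 := by
        rcases eq_or_lt_of_le hx0 with h | h
        · rw [← h, hα0]; positivity
        · have := (hhigh x h).trans (hδp (2*x) (by linarith)
            (by have := lt_of_lt_of_le hxlt (min_le_left _ _); linarith))
          simp only [hα, if_neg h.ne']
          linarith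
      rw [← h0, hα0, Real.dist_eq, sub_zero, abs_of_nonneg (hαnn x hx0)]
      have := lt_of_lt_of_le hxlt (min_le_right _ _)
      calc α x ≤ x + ε/3 := hb
      _ < ε := by linarith
    · apply ContinuousAt.continuousWithinAt
      have hev : (fun x => x + x⁻¹ * (F (2*x) - F x)) =ᶠ[nhds s] α := by
        filter_upwards [eventually_ne_nhds h0.ne'] with x hx
        have hadj : (∫ u in x..2*x, ν u) = F (2*x) - F x := by
          have := intervalIntegral.integral_add_adjacent_intervals (hint 0 x) (hint x (2*x))
          simp only [hF]; linarith
        simp [hα, if_neg hx, hadj]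
      refine ContinuousAt.congr ?_ hev
      exact continuousAt_id.add ((continuousAt_inv₀ h0.ne').mul
        (((hFc.comp (continuous_const.mul continuous_id)).sub hFc).continuousAt))
  refine ⟨α, hcont, hmonoα, hα0, fun s hs => ?_, fun s hs => ?_, hαnn⟩
  · rcases eq_or_lt_of_le hs with h | h
    · rw [← h, hα0]
    · simp only [hα, if_neg h.ne']
      have := (hnn s).trans (hlow s h); linarith
  · rcases eq_or_lt_of_le hs with h | h
    · rw [← h, hα0, hν0]
    · simp only [hα, if_neg h.ne']
      have := hlow s h; linarith

/-- Auxiliary: continuous class-L envelope of an antitone decay bound. -/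
private 
lemma envelopeL (a : ℝ → ℝ) (hanti : Antitone a) (hnn : ∀ t, 0 ≤ a t)
    (hlim : ∀ ε > (0:ℝ), ∃ T : ℝ, ∀ t ≥ T, a t ≤ ε) :
    ∃ φ : ℝ → ℝ, Continuous φ ∧ Antitone φ ∧ (∀ t, a t ≤ φ t) ∧ (∀ t, 0 ≤ φ t) ∧
      Tendsto φ atTop (nhds 0) := by
  have hint : ∀ c d : ℝ, IntervalIntegrable a MeasureTheory.volume c d :=
    fun c d => ((hanti.antitoneOn _)).intervalIntegrable
  set F : ℝ → ℝ := fun x => ∫ u in (0:ℝ)..x, a u with hF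
  have hFc : Continuous F := intervalIntegral.continuous_primitive hint 0
  set φ : ℝ → ℝ := fun t => ∫ u in (t-1)..t, a u with hφ
  have hrepr : ∀ t, φ t = F t - F (t-1) := by
    intro t
    have := intervalIntegral.integral_add_adjacent_intervals (hint 0 (t-1)) (hint (t-1) t)
    simp only [hφ, hF]; linarith
  have hφc : Continuous φ := by
    simp only [funext hrepr]
    exact hFc.sub (hFc.comp (continuous_id.sub continuous_const))
  have hintc : ∀ t : ℝ, IntervalIntegrable (fun u => a (u + (t-1))) MeasureTheory.volume 0 1 :=
    fun t => (((hanti.comp_monotone (monotone_id.add_const _)).antitoneOn _)).intervalIntegrable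
  have hsub : ∀ t : ℝ, φ t = ∫ u in (0:ℝ)..1, a (u + (t-1)) := by
    intro t
    rw [intervalIntegral.integral_comp_add_right a (t-1)]
    simp only [hφ]
    norm_num
  have hφanti : Antitone φ := by
    intro t t' htt'
    rw [hsub t, hsub t']
    apply intervalIntegral.integral_mono_on zero_le_one (hintc t') (hintc t)
    intro u _
    exact hanti (by linarith)
  have hge : ∀ t, a t ≤ φ t := by
    intro t
    have h2 := intervalIntegral.integral_mono_on (by linarith : t-1 ≤ t)
      (_root_.intervalIntegrable_const) (hint (t-1) t) (fun u hu => hanti hu.2)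
    rw [intervalIntegral.integral_const, smul_eq_mul] at h2
    calc a t = (t - (t-1)) * a t := by ring_nf
    _ ≤ _ := h2
  have hle : ∀ t, φ t ≤ a (t-1) := by
    intro t
    have h2 := intervalIntegral.integral_mono_on (by linarith : t-1 ≤ t)
      (hint (t-1) t) (_root_.intervalIntegrable_const) (fun u hu => hanti hu.1)
    rw [intervalIntegral.integral_const, smul_eq_mul] at h2
    calc φ t ≤ (t - (t-1)) * a (t-1) := h2
    _ = a (t-1) := by ring_nf
  have hφnn : ∀ t, 0 ≤ φ t := fun t => (hnn t).trans (hge t)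
  refine ⟨φ, hφc, hφanti, hge, hφnn, ?_⟩
  rw [Metric.tendsto_atTop]
  intro ε hε
  obtain ⟨T, hT⟩ := hlim (ε/2) (by linarith)
  refine ⟨T + 1, fun t ht => ?_⟩
  rw [Real.dist_eq, sub_zero, abs_of_nonneg (hφnn t)]
  calc φ t ≤ a (t-1) := hle t
  _ ≤ ε/2 := hT (t-1) (by linarith)
  _ < ε := by linarith


/-- A function `β : [0,∞) × [0,∞) → [0,∞)` of class `KL`: continuous, zero at `s = 0`,
nondecreasing in `s`, and nonincreasing in `t` with limit `0` at infinity. -/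
def IsClassKL (β : ℝ → ℝ → ℝ) : Prop :=
  ContinuousOn (fun q : ℝ × ℝ => β q.1 q.2) (Set.Ici 0 ×ˢ Set.Ici 0) ∧
  (∀ s t : ℝ, 0 ≤ s → 0 ≤ t → 0 ≤ β s t) ∧
  (∀ t : ℝ, 0 ≤ t → β 0 t = 0) ∧
  (∀ t : ℝ, 0 ≤ t → MonotoneOn (fun s => β s t) (Set.Ici 0)) ∧
  (∀ s : ℝ, 0 ≤ s → AntitoneOn (fun t => β s t) (Set.Ici 0)) ∧
  (∀ s : ℝ, 0 ≤ s → Tendsto (fun t => β s t) atTop (nhds 0))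

/-- Semiglobal practical preservation of the `KL` bound of a stable and globally
attractive fixed point of the exact Poincaré map under `δ`-perturbed (computed)
iterations. -/
theorem stmt_9 (n : ℕ) (hn : 1 ≤ n)
    (S : Set (EuclideanSpace ℝ (Fin n))) (hS : IsCompact S)
    (P : EuclideanSpace ℝ (Fin n) → EuclideanSpace ℝ (Fin n))
    (hPmaps : MapsTo P S S) (hPcont : ContinuousOn P S)
    (xstar : EuclideanSpace ℝ (Fin n)) (hxS : xstar ∈ S)
    (hfix : P xstar = xstar)
    (hstable : ∀ ε > (0:ℝ), ∃ δ > (0:ℝ), ∀ x ∈ S, dist x xstar ≤ δ →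
      ∀ k : ℕ, dist (P^[k] x) xstar ≤ ε)
    (hattr : ∀ x ∈ S, Tendsto (fun k : ℕ => P^[k] x) atTop (nhds xstar)) :
    ∃ β : ℝ → ℝ → ℝ, IsClassKL β ∧ (∀ s : ℝ, 0 ≤ s → s ≤ β s 0) ∧
      (∀ x ∈ S, ∀ k : ℕ, dist (P^[k] x) xstar ≤ β (dist x xstar) (k : ℝ)) ∧
      (∀ ε > (0:ℝ), ∀ K : Set (EuclideanSpace ℝ (Fin n)), IsCompact K → ∀ J : ℕ,
        ∃ δstar > (0:ℝ), ∀ δ ∈ Ioc (0:ℝ) δstar,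
          ∀ N : ℕ, ∀ y : ℕ → EuclideanSpace ℝ (Fin n),
            y 0 ∈ K →
            (∀ j < N, ∃ z ∈ closedBall (y j) δ ∩ S, dist (y (j+1)) (P z) ≤ δ) →
            ∀ j ≤ N, j ≤ J →
              dist (y j) xstar ≤ β (dist (y 0) xstar) (j : ℝ) + ε) := by
  have hiter : ∀ k : ℕ, MapsTo (P^[k]) S S := fun k => hPmaps.iterate k
  have hiterCont : ∀ k : ℕ, ContinuousOn (P^[k]) S := by
    intro k
    induction k with
    | zero => simpa using continuousOn_id
    | succ k ih =>
      rw [Function.iterate_succ']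
      exact hPcont.comp ih (hiter k)
  obtain ⟨C, hC⟩ : ∃ C : ℝ, ∀ x ∈ S, dist x xstar ≤ C := by
    obtain ⟨r, hr⟩ := hS.isBounded.subset_closedBall xstar
    exact ⟨r, fun x hx => hr hx⟩
  have hC0 : 0 ≤ C := le_trans dist_nonneg (hC xstar hxS)
  -- uniform attraction
  have hUA : ∀ ε > (0:ℝ), ∃ T : ℕ, ∀ x ∈ S, ∀ k ≥ T, dist (P^[k] x) xstar ≤ ε := by
    intro ε hε
    obtain ⟨δ, hδ, hδp⟩ := hstable ε hε
    have h1 : ∀ x ∈ S, ∃ (k : ℕ) (U : Set (EuclideanSpace ℝ (Fin n))),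
        IsOpen U ∧ x ∈ U ∧ ∀ y ∈ U ∩ S, dist (P^[k] y) xstar ≤ δ := by
      intro x hx
      obtain ⟨k, hk⟩ := ((hattr x hx).eventually (Metric.ball_mem_nhds xstar hδ)).exists
      have hcw : ContinuousWithinAt (P^[k]) S x := (hiterCont k) x hx
      have hmem : (P^[k]) ⁻¹' (Metric.ball xstar δ) ∈ nhdsWithin x S :=
        hcw.preimage_mem_nhdsWithin (isOpen_ball.mem_nhds hk)
      obtain ⟨U, hUo, hxU, hUsub⟩ := mem_nhdsWithin.mp hmem
      exact ⟨k, U, hUo, hxU, fun y hy => le_of_lt (hUsub ⟨hy.1, hy.2⟩)⟩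
    choose! k U hUo hxU hUp using h1
    obtain ⟨t, htc⟩ := hS.elim_nhds_subcover' (fun x hx => U x)
      (fun x hx => (hUo x hx).mem_nhds (hxU x hx))
    refine ⟨t.sup (fun x => k x), fun x hx k' hk' => ?_⟩
    obtain ⟨x₀, hx₀t, hx₀U⟩ := mem_iUnion₂.mp (htc hx)
    have hsup : k ↑x₀ ≤ t.sup (fun x => k ↑x) := Finset.le_sup (f := fun (x : S) => k ↑x) hx₀t
    have hk₀ : k ↑x₀ ≤ k' := le_trans hsup hk'
    have hd : dist (P^[k ↑x₀] x) xstar ≤ δ := hUp x₀ x₀.2 x ⟨hx₀U, hx⟩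
    have heq : P^[k'] x = P^[k' - k ↑x₀] (P^[k ↑x₀] x) := by
      rw [← Function.iterate_add_apply, Nat.sub_add_cancel hk₀]
    rw [heq]
    exact hδp _ (hiter _ hx) hd _
  -- the stability modulus ν
  set Dset : ℝ → Set ℝ := fun s =>
    insert 0 {d | ∃ x ∈ S, dist x xstar ≤ s ∧ ∃ k : ℕ, d = dist (P^[k] x) xstar} with hDset
  have hDbdd : ∀ s, BddAbove (Dset s) := by
    intro s
    refine ⟨C, fun d hd => ?_⟩
    rcases hd with rfl | ⟨x, hx, _, k, rfl⟩
    · exact hC0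
    · exact hC _ (hiter k hx)
  set ν : ℝ → ℝ := fun s => sSup (Dset s) with hνdef
  have hνmono : Monotone ν := by
    intro s s' hss'
    apply csSup_le_csSup (hDbdd s') ⟨0, mem_insert _ _⟩
    rintro d (rfl | ⟨x, hx, hxd, k, rfl⟩)
    · exact mem_insert _ _
    · exact mem_insert_of_mem _ ⟨x, hx, hxd.trans hss', k, rfl⟩
  have hνnn : ∀ s, 0 ≤ ν s := fun s => le_csSup (hDbdd s) (mem_insert _ _)
  have hνub : ∀ x ∈ S, ∀ k : ℕ, dist (P^[k] x) xstar ≤ ν (dist x xstar) :=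
    fun x hx k => le_csSup (hDbdd _) (mem_insert_of_mem _ ⟨x, hx, le_rfl, k, rfl⟩)
  have hνsmall : ∀ ε > (0:ℝ), ∃ δ > (0:ℝ), ∀ s, 0 ≤ s → s ≤ δ → ν s ≤ ε := by
    intro ε hε
    obtain ⟨δ, hδ, hδp⟩ := hstable ε hε
    refine ⟨δ, hδ, fun s hs0 hsδ => ?_⟩
    apply csSup_le ⟨0, mem_insert _ _⟩
    rintro d (rfl | ⟨x, hx, hxd, k, rfl⟩)
    · exact hε.le
    · exact hδp x hx (hxd.trans hsδ) k
  obtain ⟨α, hαcont, hαmono, hα0, hαge, hναle, hαnn⟩ := envelopeK ν hνmono hνnn hνsmall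
  -- the attraction modulus
  set Eset : ℝ → Set ℝ := fun t =>
    insert 0 {d | ∃ x ∈ S, ∃ k : ℕ, t ≤ (k:ℝ) ∧ d = dist (P^[k] x) xstar} with hEset
  have hEbdd : ∀ t, BddAbove (Eset t) := by
    intro t
    refine ⟨C, fun d hd => ?_⟩
    rcases hd with rfl | ⟨x, hx, k, _, rfl⟩
    · exact hC0
    · exact hC _ (hiter k hx)
  set a : ℝ → ℝ := fun t => sSup (Eset t) with hadef
  have haanti : Antitone a := by
    intro t t' htt'
    apply csSup_le_csSup (hEbdd t) ⟨0, mem_insert _ _⟩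
    rintro d (rfl | ⟨x, hx, k, hk, rfl⟩)
    · exact mem_insert _ _
    · exact mem_insert_of_mem _ ⟨x, hx, k, htt'.trans hk, rfl⟩
  have hann : ∀ t, 0 ≤ a t := fun t => le_csSup (hEbdd t) (mem_insert _ _)
  have haub : ∀ x ∈ S, ∀ k : ℕ, dist (P^[k] x) xstar ≤ a (k:ℝ) :=
    fun x hx k => le_csSup (hEbdd _) (mem_insert_of_mem _ ⟨x, hx, k, le_rfl, rfl⟩)
  have halim : ∀ ε > (0:ℝ), ∃ T : ℝ, ∀ t ≥ T, a t ≤ ε := by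
    intro ε hε
    obtain ⟨T, hT⟩ := hUA ε hε
    refine ⟨(T:ℝ), fun t ht => ?_⟩
    apply csSup_le ⟨0, mem_insert _ _⟩
    rintro d (rfl | ⟨x, hx, k, hk, rfl⟩)
    · exact hε.le
    · exact hT x hx k (by exact_mod_cast le_trans ht hk)
  obtain ⟨φ, hφc, hφanti, hφge, hφnn, hφlim⟩ := envelopeL a haanti hann halim
  -- the KL function
  set β : ℝ → ℝ → ℝ := fun s t => min (α s) ((1 + s) * (φ t + max (1 - t) 0)) with hβdef
  have hψnn : ∀ t : ℝ, 0 ≤ φ t + max (1 - t) 0 :=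
    fun t => add_nonneg (hφnn t) (le_max_right _ _)
  have hβnn : ∀ s t : ℝ, 0 ≤ s → 0 ≤ β s t := by
    intro s t hs
    exact le_min (hαnn s hs) (mul_nonneg (by linarith) (hψnn t))
  have hKL : IsClassKL β := by
    refine ⟨?_, fun s t hs _ => hβnn s t hs, ?_, ?_, ?_, ?_⟩
    · -- continuity
      apply ContinuousOn.inf
      · exact hαcont.comp continuousOn_fst (fun q hq => hq.1)
      · apply Continuous.continuousOn
        exact (continuous_const.add continuous_fst).mul
          ((hφc.comp continuous_snd).add ((continuous_const.sub continuous_snd).max continuous_const))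
    · intro t _
      have h1 : β 0 t = min (α 0) ((1+0) * (φ t + max (1-t) 0)) := rfl
      rw [h1, hα0]
      exact min_eq_left (by nlinarith [hψnn t])
    · intro t _
      intro s hs s' hs' hss'
      apply min_le_min (hαmono hs hs' hss')
      apply mul_le_mul_of_nonneg_right (by linarith) (hψnn t)
    · intro s hs
      intro t _ t' _ htt'
      apply min_le_min le_rfl
      apply mul_le_mul_of_nonneg_left _ (by linarith : (0:ℝ) ≤ 1 + s)
      exact add_le_add (hφanti htt') (max_le_max (by linarith) le_rfl)
    · intro s hs
      have hub : ∀ t : ℝ, β s t ≤ (1 + s) * (φ t + max (1 - t) 0) := fun t => min_le_right _ _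
      have hlb : ∀ t : ℝ, 0 ≤ β s t := fun t => hβnn s t hs
      have hmaxlim : Tendsto (fun t : ℝ => max (1 - t) 0) atTop (nhds 0) := by
        apply Tendsto.congr' _ tendsto_const_nhds
        filter_upwards [eventually_ge_atTop (1:ℝ)] with t ht
        rw [max_eq_right (by linarith)]
      have h2 : Tendsto (fun t : ℝ => (1 + s) * (φ t + max (1 - t) 0)) atTop (nhds 0) := by
        have := (hφlim.add hmaxlim).const_mul (1 + s)
        simpa using this
      exact tendsto_of_tendsto_of_tendsto_of_le_of_le tendsto_const_nhds h2 hlb hub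
  have hβs0 : ∀ s : ℝ, 0 ≤ s → s ≤ β s 0 := by
    intro s hs
    apply le_min (hαge s hs)
    have h1 : max (1 - (0:ℝ)) 0 = 1 := by norm_num
    rw [h1]
    nlinarith [hφnn 0]
  have hbound : ∀ x ∈ S, ∀ k : ℕ, dist (P^[k] x) xstar ≤ β (dist x xstar) (k:ℝ) := by
    intro x hx k
    apply le_min ((hνub x hx k).trans (hναle _ dist_nonneg))
    calc dist (P^[k] x) xstar ≤ a (k:ℝ) := haub x hx k
    _ ≤ φ (k:ℝ) := hφge _
    _ ≤ (1 + dist x xstar) * (φ (k:ℝ) + max (1 - (k:ℝ)) 0) := by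
        nlinarith [hφnn (k:ℝ), le_max_right (1 - (k:ℝ)) (0:ℝ), dist_nonneg (x := x) (y := xstar)]
  refine ⟨β, hKL, hβs0, hbound, ?_⟩
  have hPuc := Metric.uniformContinuousOn_iff.mp (hS.uniformContinuousOn_of_continuous hPcont)
  -- tracking lemma: perturbed sequences stay close to exact trajectories over finite horizons
  have htrack : ∀ J' : ℕ, ∀ η > (0:ℝ), ∃ δstar > (0:ℝ), ∀ δ, 0 < δ → δ ≤ δstar →
      ∀ N : ℕ, ∀ y : ℕ → EuclideanSpace ℝ (Fin n),
        (∀ j < N, ∃ z ∈ closedBall (y j) δ ∩ S, dist (y (j+1)) (P z) ≤ δ) →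
        ∀ z0 ∈ S, dist (y 0) z0 ≤ δ →
        ∀ j, j ≤ N → j ≤ J' → dist (y j) (P^[j] z0) ≤ η := by
    intro J'
    induction J' with
    | zero =>
      intro η hη
      refine ⟨η, hη, fun δ hδ0 hδη N y hy z0 hz0 hd j hjN hj0 => ?_⟩
      have hj : j = 0 := Nat.le_zero.mp hj0
      subst hj
      simpa using hd.trans hδη
    | succ J' ih =>
      intro η hη
      obtain ⟨θ, hθ, hθp⟩ := hPuc (η/3) (by linarith)
      obtain ⟨δ1, hδ1, h1p⟩ := ih (min (η/3) (θ/3)) (by positivity)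
      refine ⟨min δ1 (min (η/3) (θ/3)), by positivity,
        fun δ hδ0 hδle N y hy z0 hz0 hd j hjN hjJ => ?_⟩
      have hδ1le : δ ≤ δ1 := le_trans hδle (min_le_left _ _)
      have hδη3 : δ ≤ η/3 := le_trans hδle (le_trans (min_le_right _ _) (min_le_left _ _))
      have hδθ3 : δ ≤ θ/3 := le_trans hδle (le_trans (min_le_right _ _) (min_le_right _ _))
      rcases Nat.lt_or_ge j (J'+1) with hj | hj
      · have := h1p δ hδ0 hδ1le N y hy z0 hz0 hd j hjN (Nat.lt_succ_iff.mp hj)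
        exact this.trans (le_trans (min_le_left _ _) (by linarith))
      · have hjeq : j = J' + 1 := le_antisymm hjJ hj
        subst hjeq
        obtain ⟨z, ⟨hzball, hzS⟩, hznext⟩ := hy J' (by omega)
        have he : dist (y J') (P^[J'] z0) ≤ min (η/3) (θ/3) :=
          h1p δ hδ0 hδ1le N y hy z0 hz0 hd J' (by omega) le_rfl
        have heθ : dist (y J') (P^[J'] z0) ≤ θ/3 := he.trans (min_le_right _ _)
        have hz0S : P^[J'] z0 ∈ S := hiter J' hz0
        have hdzz : dist z (P^[J'] z0) < θ := by
          have h1 : dist z (y J') ≤ δ := mem_closedBall.mp hzball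
          calc dist z (P^[J'] z0) ≤ dist z (y J') + dist (y J') (P^[J'] z0) :=
            dist_triangle _ _ _
          _ ≤ θ/3 + θ/3 := add_le_add (h1.trans hδθ3) heθ
          _ < θ := by linarith
        have hP : dist (P z) (P (P^[J'] z0)) < η/3 := hθp z hzS _ hz0S hdzz
        have hiterlast : P^[J'+1] z0 = P (P^[J'] z0) := Function.iterate_succ_apply' P J' z0
        calc dist (y (J'+1)) (P^[J'+1] z0)
            ≤ dist (y (J'+1)) (P z) + dist (P z) (P^[J'+1] z0) := dist_triangle _ _ _
        _ ≤ δ + η/3 := by rw [hiterlast]; exact add_le_add hznext hP.le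
        _ ≤ η := by linarith
  -- final assembly of part (b)
  intro ε hε K hK J
  obtain ⟨R, hR⟩ : ∃ R : ℝ, ∀ yy ∈ K, dist yy xstar ≤ R := by
    obtain ⟨r, hr⟩ := hK.isBounded.subset_closedBall xstar
    exact ⟨r, fun yy hyy => hr hyy⟩
  set R' : ℝ := max R 0 with hR'def
  have hR'0 : 0 ≤ R' := le_max_right _ _
  set box : Set (ℝ × ℝ) := Icc (0:ℝ) (R'+1) ×ˢ Icc (0:ℝ) (J:ℝ) with hboxdef
  have hboxsub : box ⊆ Ici (0:ℝ) ×ˢ Ici (0:ℝ) := fun q hq => ⟨hq.1.1, hq.2.1⟩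
  have hboxc : IsCompact box := isCompact_Icc.prod isCompact_Icc
  have hβuc := Metric.uniformContinuousOn_iff.mp
    (hboxc.uniformContinuousOn_of_continuous (hKL.1.mono hboxsub))
  obtain ⟨δ2, hδ2, hδ2p⟩ := hβuc (ε/2) (by linarith)
  obtain ⟨δ3, hδ3, hδ3p⟩ := htrack J (ε/2) (by linarith)
  refine ⟨min 1 (min δ3 (δ2/2)), by positivity, fun δ hδ N y hy0K hy j hjN hjJ => ?_⟩
  obtain ⟨hδ0, hδle⟩ := hδ
  have hδa : δ ≤ 1 := le_trans hδle (min_le_left _ _)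
  have hδb : δ ≤ δ3 := le_trans hδle (le_trans (min_le_right _ _) (min_le_left _ _))
  have hδc : δ ≤ δ2/2 := le_trans hδle (le_trans (min_le_right _ _) (min_le_right _ _))
  rcases Nat.eq_zero_or_pos j with rfl | hjpos
  · have := hβs0 (dist (y 0) xstar) dist_nonneg
    simp only [Nat.cast_zero]
    linarith
  · have hN1 : 0 < N := lt_of_lt_of_le hjpos hjN
    obtain ⟨z0, ⟨hz0ball, hz0S⟩, _⟩ := hy 0 hN1
    have htr : dist (y j) (P^[j] z0) ≤ ε/2 :=
      hδ3p δ hδ0 hδb N y hy z0 hz0S (by rw [dist_comm]; exact mem_closedBall.mp hz0ball) j hjN hjJ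
    have hb1 : dist (P^[j] z0) xstar ≤ β (dist z0 xstar) (j:ℝ) := hbound z0 hz0S j
    set s0 : ℝ := dist (y 0) xstar with hs0def
    have hs00 : 0 ≤ s0 := dist_nonneg
    have hs0R : s0 ≤ R' := le_trans (hR _ hy0K) (le_max_left _ _)
    have hz0d : dist z0 xstar ≤ s0 + δ := by
      calc dist z0 xstar ≤ dist z0 (y 0) + dist (y 0) xstar := dist_triangle _ _ _
      _ ≤ δ + s0 := add_le_add (mem_closedBall.mp hz0ball) le_rfl
      _ = s0 + δ := by ring
    have hb2 : β (dist z0 xstar) (j:ℝ) ≤ β (s0 + δ) (j:ℝ) :=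
      hKL.2.2.2.1 (j:ℝ) (Nat.cast_nonneg j) (mem_Ici.mpr dist_nonneg)
        (mem_Ici.mpr (by linarith)) hz0d
    have hjJ' : (j:ℝ) ≤ (J:ℝ) := by exact_mod_cast hjJ
    have hp1 : ((s0 + δ, (j:ℝ)) : ℝ × ℝ) ∈ box := by
      simp only [hboxdef, mem_prod, mem_Icc]
      exact ⟨⟨by linarith, by linarith⟩, ⟨Nat.cast_nonneg j, hjJ'⟩⟩
    have hp2 : ((s0, (j:ℝ)) : ℝ × ℝ) ∈ box := by
      simp only [hboxdef, mem_prod, mem_Icc]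
      exact ⟨⟨hs00, by linarith⟩, ⟨Nat.cast_nonneg j, hjJ'⟩⟩
    have hdistp : dist ((s0 + δ, (j:ℝ)) : ℝ × ℝ) ((s0, (j:ℝ)) : ℝ × ℝ) < δ2 := by
      rw [Prod.dist_eq]
      simp only [dist_self]
      rw [Real.dist_eq]
      have h1 : |s0 + δ - s0| = δ := by rw [add_sub_cancel_left, abs_of_pos hδ0]
      rw [h1]
      rw [max_eq_left hδ0.le]
      linarith
    have hb3 : β (s0 + δ) (j:ℝ) ≤ β s0 (j:ℝ) + ε/2 := by
      have h2 := hδ2p _ hp1 _ hp2 hdistp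
      rw [Real.dist_eq] at h2
      have h3 := (abs_lt.mp h2).2
      simp only at h3
      linarith
    calc dist (y j) xstar ≤ dist (y j) (P^[j] z0) + dist (P^[j] z0) xstar := dist_triangle _ _ _
    _ ≤ ε/2 + β (s0 + δ) (j:ℝ) := by linarith
    _ ≤ ε/2 + (β s0 (j:ℝ) + ε/2) := by linarith
    _ = β s0 (j:ℝ) + ε := by ring
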